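/- Let $\Omega = \{1, 2, \dots\}$, $P_0\{\omega\} = 2^{-\omega}$, and $L$ the linear span of $X(\omega) = 1/\omega$. Then $\operatorname{ess\,sup}(Y) \ge 0$ for all $Y \in L$ (so an absolutely continuous martingale finitely additive probability exists), but the no-arbitrage condition fails: $P_0(X > 0) > 0$ while $P_0(X < 0) = 0$. -/

import Mathlib

open MeasureTheory Set

namespace FAP

variable {Ω : Type*}

/-- A finitely additive probability on the power set of `Ω`. -/
def IsFAP (P : Set Ω → ℝ) : Prop :=
  P univ = 1 ∧ (∀ A : Set Ω, 0 ≤ P A) ∧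
    ∀ A B : Set Ω, Disjoint A B → P (A ∪ B) = P A + P B

/-- A finitely additive probability on the σ-field of a measurable space `Ω`. -/
def IsFAPm [MeasurableSpace Ω] (P : Set Ω → ℝ) : Prop :=
  P univ = 1 ∧ (∀ A : Set Ω, MeasurableSet A → 0 ≤ P A) ∧
    ∀ A B : Set Ω, MeasurableSet A → MeasurableSet B → Disjoint A B →
      P (A ∪ B) = P A + P B

/-- The finitely additive integral of a bounded function `X` with respect to a
finitely additive probability `P`, defined via the layer-cake formula
(which agrees with the uniform-limit-of-simple-functions definition). -/
noncomputable def faIntegral (P : Set Ω → ℝ) (X : Ω → ℝ) : ℝ :=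
  (∫ t in Ioi (0 : ℝ), P {ω | t < X ω}) -
    (∫ t in Iio (0 : ℝ), (1 - P {ω | t < X ω}))

/-- `P` is absolutely continuous with respect to the (countably additive) measure `P₀`. -/
def AC [MeasurableSpace Ω] (P : Set Ω → ℝ) (P₀ : Measure Ω) : Prop :=
  ∀ A : Set Ω, MeasurableSet A → P₀ A = 0 → P A = 0

/-- `P` and `P₀` have the same null sets. -/
def EquivP [MeasurableSpace Ω] (P : Set Ω → ℝ) (P₀ : Measure Ω) : Prop :=
  ∀ A : Set Ω, MeasurableSet A → (P A = 0 ↔ P₀ A = 0)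

/-- `P` is pure: the only countably additive measure `Γ` with `0 ≤ Γ ≤ P` is `Γ = 0`. -/
def IsPure [MeasurableSpace Ω] (P : Set Ω → ℝ) : Prop :=
  ∀ Γ : Measure Ω, (∀ A : Set Ω, MeasurableSet A → Γ A ≤ ENNReal.ofReal (P A)) → Γ = 0

/-- The essential supremum `inf {a : P₀(X > a) = 0}` of a random variable `X`. -/
noncomputable def essSupR [MeasurableSpace Ω] (P₀ : Measure Ω) (X : Ω → ℝ) : ℝ :=
  sInf {a : ℝ | P₀ {ω | a < X ω} = 0}

end FAP

open FAP

/-- for Ω = {1,2,...}, P₀{ω} = 2^{-ω} and L the span of X(ω) = 1/ω,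
one has ess sup(Y) ≥ 0 for all Y ∈ L (so an absolutely continuous martingale
finitely additive probability exists), but no-arbitrage fails:
P₀(X > 0) > 0 while P₀(X < 0) = 0. -/
theorem stmt15 [MeasurableSpace ℕ+] (hall : ∀ A : Set ℕ+, MeasurableSet A)
    (P₀ : Measure ℕ+) [IsProbabilityMeasure P₀]
    (hP₀ : ∀ ω : ℕ+, P₀ {ω} = (1 / 2 : ENNReal) ^ (ω : ℕ))
    (X : ℕ+ → ℝ) (hX : X = fun ω : ℕ+ => (1 : ℝ) / ((ω : ℕ) : ℝ))
    (L : Submodule ℝ (ℕ+ → ℝ)) (hLdef : L = Submodule.span ℝ {X}) :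
    (∀ Y ∈ L, 0 ≤ FAP.essSupR P₀ Y) ∧
    (∃ P : Set ℕ+ → ℝ, FAP.IsFAPm P ∧ FAP.AC P P₀ ∧
      ∀ Y ∈ L, FAP.faIntegral P Y = 0) ∧
    0 < P₀ {ω | 0 < X ω} ∧ P₀ {ω | X ω < 0} = 0 := by
  classical
  subst hX
  -- every P₀-null set is empty
  have hkey : ∀ A : Set ℕ+, P₀ A = 0 → A = ∅ := by
    intro A hA
    by_contra h
    obtain ⟨ω, hω⟩ := Set.nonempty_iff_ne_empty.2 h
    have h1 : P₀ {ω} ≤ P₀ A := measure_mono (Set.singleton_subset_iff.2 hω)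
    rw [hP₀, hA] at h1
    have h2 : ((1 : ENNReal) / 2) ^ (ω : ℕ) ≠ 0 := pow_ne_zero _ (by norm_num)
    exact h2 (le_antisymm h1 zero_le)
  have hposω : ∀ ω : ℕ+, (0 : ℝ) < ((ω : ℕ) : ℝ) := by
    intro ω
    exact_mod_cast ω.pos
  refine ⟨?_, ?_, ?_, ?_⟩
  · -- ess sup ≥ 0
    intro Y hY
    rw [hLdef, Submodule.mem_span_singleton] at hY
    obtain ⟨c, rfl⟩ := hY
    apply Real.sInf_nonneg
    intro a ha
    simp only [Set.mem_setOf_eq] at ha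
    have hempty := hkey _ ha
    by_contra hlt
    push_neg at hlt
    set n : ℕ+ := ⟨⌈|c| / (-a)⌉₊ + 1, Nat.succ_pos _⟩ with hn
    have hna : |c| / (-a) < ((n : ℕ) : ℝ) := by
      have := Nat.le_ceil (|c| / (-a))
      have hcoe : ((n : ℕ) : ℝ) = (⌈|c| / (-a)⌉₊ : ℝ) + 1 := by
        simp [hn]
      linarith
    have hnpos := hposω n
    have habs : |c * ((1 : ℝ) / ((n : ℕ) : ℝ))| < -a := by
      rw [abs_mul, abs_of_pos (by positivity : (0:ℝ) < (1 : ℝ) / ((n : ℕ) : ℝ))]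
      rw [mul_one_div, div_lt_iff₀ hnpos]
      rw [div_lt_iff₀ (by linarith : (0:ℝ) < -a)] at hna
      linarith
    have hmem : n ∈ {ω : ℕ+ | a < (c • fun ω : ℕ+ => (1 : ℝ) / ((ω : ℕ) : ℝ)) ω} := by
      simp only [Set.mem_setOf_eq, Pi.smul_apply, smul_eq_mul]
      have := neg_abs_le (c * ((1 : ℝ) / ((n : ℕ) : ℝ)))
      linarith
    rw [hempty] at hmem
    exact Set.notMem_empty n hmem
  · -- the pure FAP from the hyperfilter
    refine ⟨fun A => if A ∈ Filter.hyperfilter ℕ+ then 1 else 0, ⟨?_, ?_, ?_⟩, ?_, ?_⟩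
    · exact if_pos Filter.univ_mem
    · intro A _
      dsimp only
      split <;> norm_num
    · intro A B _ _ hAB
      by_cases hA : A ∈ Filter.hyperfilter ℕ+ <;>
        by_cases hB : B ∈ Filter.hyperfilter ℕ+
      · exfalso
        have hint : A ∩ B ∈ Filter.hyperfilter ℕ+ := Filter.inter_mem hA hB
        rw [Set.disjoint_iff_inter_eq_empty.1 hAB] at hint
        exact Filter.empty_notMem _ hint
      all_goals simp [Ultrafilter.union_mem_iff, hA, hB]
    · -- absolute continuity
      intro A _ hA
      rw [hkey A hA]
      simp [Filter.empty_notMem]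
    · -- faIntegral = 0 on L
      intro Y hY
      rw [hLdef, Submodule.mem_span_singleton] at hY
      obtain ⟨c, rfl⟩ := hY
      unfold FAP.faIntegral
      rw [setIntegral_congr_fun measurableSet_Ioi
          (g := fun _ : ℝ => (0 : ℝ)) ?_,
        setIntegral_congr_fun measurableSet_Iio
          (g := fun _ : ℝ => (0 : ℝ)) ?_, integral_zero, integral_zero, sub_zero]
      · -- t < 0 side: the set is cofinite, hence in the hyperfilter
        intro t ht
        replace ht : t < (0:ℝ) := ht
        have hfin : ({ω : ℕ+ | t < (c • fun ω : ℕ+ => (1 : ℝ) / ((ω : ℕ) : ℝ)) ω}ᶜ).Finite := by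
          apply Set.Finite.subset (Set.finite_Iic (⟨⌈c / t⌉₊ + 1, Nat.succ_pos _⟩ : ℕ+))
          intro ω hω
          replace hω : c * ((1:ℝ) / ((ω : ℕ) : ℝ)) ≤ t := not_lt.1 hω
          have hωpos : (0:ℝ) < ((ω : ℕ) : ℝ) := hposω ω
          have hct : c ≤ t * ((ω : ℕ) : ℝ) := by
            have h := mul_le_mul_of_nonneg_right hω hωpos.le
            rwa [mul_assoc, one_div_mul_cancel (ne_of_gt hωpos), mul_one] at h
          have h2 : ((ω : ℕ) : ℝ) ≤ c / t := by
            rw [le_div_iff_of_neg ht]; linarith [mul_comm t ((ω : ℕ) : ℝ)]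
          have h3 : ((ω : ℕ) : ℝ) < (⌈c / t⌉₊ : ℝ) + 1 := lt_of_le_of_lt h2
            (lt_of_le_of_lt (Nat.le_ceil _) (by linarith))
          have h4 : (ω : ℕ) ≤ ⌈c / t⌉₊ + 1 := by exact_mod_cast h3.le
          exact Set.mem_Iic.2 (by exact_mod_cast h4)
        have hmem := Filter.mem_hyperfilter_of_finite_compl hfin
        show (1 : ℝ) - (if {ω : ℕ+ | t < (c • fun ω : ℕ+ => (1 : ℝ) / ((ω : ℕ) : ℝ)) ω} ∈ Filter.hyperfilter ℕ+ then (1 : ℝ) else 0) = 0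
        rw [if_pos hmem]
        ring
      · -- t > 0 side: the set is finite, hence not in the hyperfilter
        intro t ht
        replace ht : (0:ℝ) < t := ht
        have hfin : {ω : ℕ+ | t < (c • fun ω : ℕ+ => (1 : ℝ) / ((ω : ℕ) : ℝ)) ω}.Finite := by
          apply Set.Finite.subset (Set.finite_Iic (⟨⌈c / t⌉₊ + 1, Nat.succ_pos _⟩ : ℕ+))
          intro ω hω
          replace hω : t < c * ((1:ℝ) / ((ω : ℕ) : ℝ)) := hω
          have hωpos : (0:ℝ) < ((ω : ℕ) : ℝ) := hposω ω
          have hct : t * ((ω : ℕ) : ℝ) < c := by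
            have h := mul_lt_mul_of_pos_right hω hωpos
            rwa [mul_assoc, one_div_mul_cancel (ne_of_gt hωpos), mul_one] at h
          have h2 : ((ω : ℕ) : ℝ) < c / t := by
            rw [lt_div_iff₀ ht]; linarith [mul_comm t ((ω : ℕ) : ℝ)]
          have h3 : ((ω : ℕ) : ℝ) < (⌈c / t⌉₊ : ℝ) + 1 := lt_of_lt_of_le h2
            (le_trans (Nat.le_ceil _) (by linarith))
          have h4 : (ω : ℕ) ≤ ⌈c / t⌉₊ + 1 := by exact_mod_cast h3.le
          exact Set.mem_Iic.2 (by exact_mod_cast h4)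
        exact if_neg hfin.notMem_hyperfilter
  · -- P₀(X > 0) > 0
    have huniv : {ω : ℕ+ | 0 < (fun ω : ℕ+ => (1 : ℝ) / ((ω : ℕ) : ℝ)) ω} = Set.univ := by
      ext ω
      simp only [Set.mem_setOf_eq, Set.mem_univ, iff_true]
      exact one_div_pos.2 (hposω ω)
    rw [huniv, measure_univ]
    norm_num
  · -- P₀(X < 0) = 0
    have hempty : {ω : ℕ+ | (fun ω : ℕ+ => (1 : ℝ) / ((ω : ℕ) : ℝ)) ω < 0} = ∅ := by
      ext ω
      simp only [Set.mem_setOf_eq, Set.mem_empty_iff_false, iff_false, not_lt]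
      positivity
    rw [hempty, measure_empty]
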